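/- For finite nonempty sets A, B ⊆ ℤ, the Minkowski sum satisfies |A + B| ≥ |A| + |B| - 1, with equality if and only if A and B are arithmetic progressions with the same common difference, or one of them is a singleton. -/

import Mathlib

open scoped Pointwise

/-- The finite arithmetic progression `{a, a+m, ..., a+(k-1)m}` in `ℤ`. -/
def AP (a m : ℤ) (k : ℕ) : Finset ℤ := (Finset.range k).image (fun i : ℕ => a + (i : ℤ) * m)

lemma mem_AP {a m x : ℤ} {k : ℕ} : x ∈ AP a m k ↔ ∃ i, i < k ∧ x = a + (i : ℤ) * m := by
  unfold AP
  simp only [Finset.mem_image, Finset.mem_range]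
  constructor
  · rintro ⟨i, hi, rfl⟩; exact ⟨i, hi, rfl⟩
  · rintro ⟨i, hi, rfl⟩; exact ⟨i, hi, rfl⟩

lemma AP_card {m : ℤ} (hm : m ≠ 0) (a : ℤ) (k : ℕ) : (AP a m k).card = k := by
  rw [AP, Finset.card_image_of_injective _ ?_, Finset.card_range]
  intro i j h
  have h' : a + (i : ℤ) * m = a + (j : ℤ) * m := h
  have : (i : ℤ) * m = (j : ℤ) * m := by linarith
  have : (i : ℤ) = (j : ℤ) := mul_right_cancel₀ hm this
  exact_mod_cast this

lemma AP_add_AP (a b m : ℤ) {k l : ℕ} (hk : 1 ≤ k) (hl : 1 ≤ l) :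
    AP a m k + AP b m l = AP (a + b) m (k + l - 1) := by
  ext x
  simp only [Finset.mem_add, mem_AP]
  constructor
  · rintro ⟨y, ⟨i, hi, rfl⟩, z, ⟨j, hj, rfl⟩, rfl⟩
    exact ⟨i + j, by omega, by push_cast; ring⟩
  · rintro ⟨t, ht, rfl⟩
    refine ⟨a + ((min t (k-1) : ℕ) : ℤ) * m, ⟨min t (k-1), by omega, rfl⟩,
      b + ((t - min t (k-1) : ℕ) : ℤ) * m, ⟨t - min t (k-1), by omega, rfl⟩, ?_⟩
    have h1 : ((t - min t (k-1) : ℕ) : ℤ) = (t : ℤ) - ((min t (k-1) : ℕ) : ℤ) := by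
      have : min t (k-1) ≤ t := min_le_left _ _
      omega
    rw [h1]; ring

/-- The staircase chain through the sumset. -/
def chain (a b : ℕ → ℤ) (k j p : ℕ) : ℤ :=
  if p < j then a 0 + b p
  else if p < j + k then a (p - j) + b j
  else a (k - 1) + b (p - k + 1)

lemma chain_lo {a b : ℕ → ℤ} {k j p : ℕ} (h : p < j) : chain a b k j p = a 0 + b p := by
  unfold chain; rw [if_pos h]

lemma chain_mid {a b : ℕ → ℤ} {k j p : ℕ} (h1 : ¬ p < j) (h2 : p < j + k) :
    chain a b k j p = a (p - j) + b j := by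
  unfold chain; rw [if_neg h1, if_pos h2]

lemma chain_hi {a b : ℕ → ℤ} {k j p : ℕ} (h1 : ¬ p < j) (h2 : ¬ p < j + k) :
    chain a b k j p = a (k - 1) + b (p - k + 1) := by
  unfold chain; rw [if_neg h1, if_neg h2]

lemma chain_mem {k l : ℕ} (hk : 1 ≤ k) (a b : ℕ → ℤ) {j : ℕ} (hj : j < l) :
    ∀ p, p < k + l - 1 → ∃ i' j', i' < k ∧ j' < l ∧ chain a b k j p = a i' + b j' := by
  intro p hp
  rcases Nat.lt_or_ge p j with h1 | h1
  · exact ⟨0, p, by omega, by omega, chain_lo h1⟩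
  · rcases Nat.lt_or_ge p (j + k) with h2 | h2
    · exact ⟨p - j, j, by omega, hj, chain_mid (by omega) h2⟩
    · exact ⟨k - 1, p - k + 1, by omega, by omega, chain_hi (by omega) (by omega)⟩

lemma chain_adj {k l : ℕ} (hk : 1 ≤ k) (a b : ℕ → ℤ)
    (ha : ∀ i, i + 1 < k → a i < a (i + 1)) (hb : ∀ j, j + 1 < l → b j < b (j + 1))
    {j : ℕ} (hj : j < l) :
    ∀ p, p + 1 < k + l - 1 → chain a b k j p < chain a b k j (p + 1) := by
  intro p hp
  rcases Nat.lt_or_ge (p + 1) j with h | h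
  · rw [chain_lo (by omega), chain_lo h]
    exact add_lt_add_right (hb p (by omega)) _
  · rcases Nat.lt_or_ge p j with h2 | h2
    · -- p + 1 = j
      rw [chain_lo h2, chain_mid (by omega) (by omega)]
      have e : p + 1 - j = 0 := by omega
      have ej : j = p + 1 := by omega
      rw [e, ej]
      exact add_lt_add_right (hb p (by omega)) _
    · rcases Nat.lt_or_ge (p + 1) (j + k) with h3 | h3
      · rw [chain_mid (by omega) (by omega), chain_mid (by omega) h3]
        have e : p + 1 - j = (p - j) + 1 := by omega
        rw [e]
        exact add_lt_add_left (ha (p - j) (by omega)) _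
      · rcases Nat.lt_or_ge p (j + k) with h4 | h4
        · -- p + 1 = j + k
          rw [chain_mid (by omega) h4, chain_hi (by omega) (by omega)]
          have e1 : p - j = k - 1 := by omega
          have e2 : p + 1 - k + 1 = j + 1 := by omega
          rw [e1, e2]
          exact add_lt_add_right (hb j (by omega)) _
        · rw [chain_hi (by omega) (by omega), chain_hi (by omega) (by omega)]
          have e : p + 1 - k + 1 = (p - k + 1) + 1 := by omega
          rw [e]
          exact add_lt_add_right (hb (p - k + 1) (by omega)) _

lemma adj_mono {n : ℕ} {g : ℕ → ℤ} (hadj : ∀ p, p + 1 < n → g p < g (p + 1)) :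
    ∀ p q, p < q → q < n → g p < g q := by
  intro p q hpq hqn
  induction q with
  | zero => omega
  | succ q' ih =>
    rcases Nat.eq_or_lt_of_le (Nat.lt_succ_iff.mp hpq) with h | h
    · exact h ▸ hadj p (h ▸ hqn)
    · exact (ih h (by omega)).trans (hadj q' hqn)

lemma mono_agree {n : ℕ} {S : Finset ℤ} (hS : S.card = n) {g h : ℕ → ℤ}
    (hg : ∀ p q, p < q → q < n → g p < g q) (hgS : ∀ p, p < n → g p ∈ S)
    (hh : ∀ p q, p < q → q < n → h p < h q) (hhS : ∀ p, p < n → h p ∈ S) :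
    ∀ p, p < n → g p = h p := by
  have hg' : StrictMono (fun i : Fin n => g i) := fun i j hij => hg i j hij j.isLt
  have hh' : StrictMono (fun i : Fin n => h i) := fun i j hij => hh i j hij j.isLt
  have e1 := Finset.orderEmbOfFin_unique hS (f := fun i : Fin n => g i)
    (fun i => hgS i i.isLt) hg'
  have e2 := Finset.orderEmbOfFin_unique hS (f := fun i : Fin n => h i)
    (fun i => hhS i i.isLt) hh'
  intro p hp
  have := congrFun (e1.trans e2.symm) ⟨p, hp⟩
  simpa using this

/-- For finite nonempty sets of integers, `|A + B| ≥ |A| + |B| - 1`, with equality iff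
`A` and `B` are arithmetic progressions with the same common difference or one of them
is a singleton. -/
theorem minkowski_sum_lower_bound_and_equality (A B : Finset ℤ)
    (hA : A.Nonempty) (hB : B.Nonempty) :
    A.card + B.card - 1 ≤ (A + B).card ∧
    ((A + B).card = A.card + B.card - 1 ↔
      (∃ m : ℤ, 0 < m ∧ (∃ a, A = AP a m A.card) ∧ (∃ b, B = AP b m B.card))
      ∨ A.card = 1 ∨ B.card = 1) := by
  set k := A.card with hkdef
  set l := B.card with hldef
  have hk1 : 1 ≤ k := hA.card_pos
  have hl1 : 1 ≤ l := hB.card_pos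
  -- sorted enumerations
  set a : ℕ → ℤ := fun i => if h : i < k then A.orderEmbOfFin rfl ⟨i, h⟩ else 0 with hadef
  set b : ℕ → ℤ := fun j => if h : j < l then B.orderEmbOfFin rfl ⟨j, h⟩ else 0 with hbdef
  have haA : ∀ i, i < k → a i ∈ A := by
    intro i hi; simp only [hadef, dif_pos hi]; exact Finset.orderEmbOfFin_mem _ _ _
  have hbB : ∀ j, j < l → b j ∈ B := by
    intro j hj; simp only [hbdef, dif_pos hj]; exact Finset.orderEmbOfFin_mem _ _ _
  have ha : ∀ i, i + 1 < k → a i < a (i + 1) := by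
    intro i hi
    simp only [hadef, dif_pos (by omega : i < k), dif_pos hi]
    exact (A.orderEmbOfFin rfl).strictMono (by simp [Fin.lt_def])
  have hb : ∀ j, j + 1 < l → b j < b (j + 1) := by
    intro j hj
    simp only [hbdef, dif_pos (by omega : j < l), dif_pos hj]
    exact (B.orderEmbOfFin rfl).strictMono (by simp [Fin.lt_def])
  have hasurj : ∀ x ∈ A, ∃ i, i < k ∧ a i = x := by
    intro x hx
    have hr : x ∈ Set.range (A.orderEmbOfFin rfl) := by
      rw [Finset.range_orderEmbOfFin]; exact hx
    obtain ⟨i, hi⟩ := hr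
    exact ⟨i, i.isLt, by simp [hadef, dif_pos i.isLt, hi]; intro h; exact absurd i.isLt (not_lt.2 h)⟩
  have hbsurj : ∀ x ∈ B, ∃ j, j < l ∧ b j = x := by
    intro x hx
    have hr : x ∈ Set.range (B.orderEmbOfFin rfl) := by
      rw [Finset.range_orderEmbOfFin]; exact hx
    obtain ⟨j, hj⟩ := hr
    exact ⟨j, j.isLt, by simp [hbdef, dif_pos j.isLt, hj]; intro h; exact absurd j.isLt (not_lt.2 h)⟩
  -- chain properties
  have chainS : ∀ j, j < l → ∀ p, p < k + l - 1 → chain a b k j p ∈ A + B := by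
    intro j hj p hp
    obtain ⟨i', j', hi', hj', he⟩ := chain_mem hk1 a b hj p hp
    rw [he]
    exact Finset.add_mem_add (haA i' hi') (hbB j' hj')
  have chainMono : ∀ j, j < l → ∀ p q, p < q → q < k + l - 1 →
      chain a b k j p < chain a b k j q := by
    intro j hj
    exact adj_mono (chain_adj hk1 a b ha hb hj)
  -- the inequality
  have hineq : k + l - 1 ≤ (A + B).card := by
    have hinj : Set.InjOn (chain a b k 0) (Finset.range (k + l - 1)) := by
      intro p hp q hq hpq
      by_contra hne
      rcases lt_or_gt_of_ne hne with h | h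
      · exact absurd hpq (chainMono 0 hl1 p q h (Finset.mem_range.1 hq)).ne
      · exact absurd hpq.symm (chainMono 0 hl1 q p h (Finset.mem_range.1 hp)).ne
    calc k + l - 1 = ((Finset.range (k + l - 1)).image (chain a b k 0)).card := by
          rw [Finset.card_image_of_injOn hinj, Finset.card_range]
      _ ≤ (A + B).card := by
          apply Finset.card_le_card
          intro x hx
          obtain ⟨p, hp, rfl⟩ := Finset.mem_image.1 hx
          exact chainS 0 hl1 p (Finset.mem_range.1 hp)
  refine ⟨hineq, ?_, ?_⟩
  · -- equality implies structure
    intro hEq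
    by_cases hk' : k = 1
    · exact Or.inr (Or.inl hk')
    by_cases hl' : l = 1
    · exact Or.inr (Or.inr hl')
    have hk2 : 2 ≤ k := by omega
    have hl2 : 2 ≤ l := by omega
    -- compare consecutive chains
    have key : ∀ i j, i + 1 < k → j + 1 < l → a (i + 1) + b j = a i + b (j + 1) := by
      intro i j hi hj
      have hagree := mono_agree hEq (chainMono j (by omega)) (chainS j (by omega))
        (chainMono (j + 1) (by omega)) (chainS (j + 1) (by omega)) (j + 1 + i) (by omega)
      have e1 : chain a b k j (j + 1 + i) = a (i + 1) + b j := by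
        rw [chain_mid (by omega) (by omega)]
        congr 2
        omega
      have e2 : chain a b k (j + 1) (j + 1 + i) = a i + b (j + 1) := by
        rw [chain_mid (by omega) (by omega)]
        congr 2
        omega
      rw [e1, e2] at hagree
      exact hagree
    set m : ℤ := b 1 - b 0 with hmdef
    have hm : 0 < m := by
      have h01 : b 0 < b 1 := hb 0 (by omega)
      omega
    have hAdiff : ∀ i, i + 1 < k → a (i + 1) = a i + m := by
      intro i hi
      have h1 : a (i + 1) + b 0 = a i + b 1 := key i 0 hi (by omega)
      omega
    have hBdiff : ∀ j, j + 1 < l → b (j + 1) = b j + m := by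
      intro j hj
      have h1 : a 1 + b j = a 0 + b (j + 1) := key 0 j (by omega) hj
      have h2 : a 1 = a 0 + m := hAdiff 0 (by omega)
      omega
    have haform : ∀ i, i < k → a i = a 0 + (i : ℤ) * m := by
      intro i
      induction i with
      | zero => intro _; simp
      | succ n ih =>
        intro hn
        rw [hAdiff n hn, ih (by omega)]
        push_cast
        ring
    have hbform : ∀ j, j < l → b j = b 0 + (j : ℤ) * m := by
      intro j
      induction j with
      | zero => intro _; simp
      | succ n ih =>
        intro hn
        rw [hBdiff n hn, ih (by omega)]
        push_cast
        ring
    refine Or.inl ⟨m, hm, ⟨a 0, ?_⟩, ⟨b 0, ?_⟩⟩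
    · ext x
      rw [mem_AP]
      constructor
      · intro hx
        obtain ⟨i, hi, rfl⟩ := hasurj x hx
        exact ⟨i, hi, haform i hi⟩
      · rintro ⟨i, hi, rfl⟩
        rw [← haform i hi]
        exact haA i hi
    · ext x
      rw [mem_AP]
      constructor
      · intro hx
        obtain ⟨j, hj, rfl⟩ := hbsurj x hx
        exact ⟨j, hj, hbform j hj⟩
      · rintro ⟨j, hj, rfl⟩
        rw [← hbform j hj]
        exact hbB j hj
  · -- structure implies equality
    rintro (⟨m, hm, ⟨x, hAe⟩, ⟨y, hBe⟩⟩ | hk' | hl')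
    · have hsum : A + B = AP (x + y) m (k + l - 1) := by
        conv_lhs => rw [hAe, hBe]
        exact AP_add_AP x y m hk1 hl1
      rw [hsum, AP_card hm.ne' _ _]
    · obtain ⟨x, hx⟩ := Finset.card_eq_one.1 hk'
      rw [hx, Finset.card_singleton_add]
      omega
    · obtain ⟨y, hy⟩ := Finset.card_eq_one.1 hl'
      rw [hy, Finset.card_add_singleton]
      omega
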